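/- With F_n as above, there is an absolute constant C ≥ 1 such that for all n ≥ 1, if I and J are complementary intervals of F_n separated by at most two adjacent complementary intervals of F_n, then 1/(Cn) ≤ |I|/|J| ≤ Cn. -/

import Mathlib

/-- The mediant of two rationals: `(p/q, r/s) ↦ (p+r)/(q+s)`. -/
def mediant (a b : ℚ) : ℚ :=
  ((a.num : ℚ) + (b.num : ℚ)) / ((a.den : ℚ) + (b.den : ℚ))

/-- Insert the mediant between each pair of adjacent entries of a list. -/
def insertMediants : List ℚ → List ℚ
  | a :: b :: rest => a :: mediant a b :: insertMediants (b :: rest)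
  | l => l

/-- The Farey-type partition points `F_n` of `[0,1]`. -/
def fareyList : ℕ → List ℚ
  | 0 => [0, 1]
  | n + 1 => insertMediants (fareyList n)

theorem num_den_div (p : ℤ) (d : ℕ) (hd : d ≠ 0) (h : p.natAbs.Coprime d) :
    ((p : ℚ)/(d : ℚ)).num = p ∧ ((p:ℚ)/(d:ℚ)).den = d := by
  have : (p:ℚ)/(d:ℚ) = Rat.mk' p d hd h := by
    rw [Rat.mk_eq_mkRat, ← Rat.divInt_ofNat, Rat.divInt_eq_div]
    norm_num
  rw [this]
  exact ⟨rfl, rfl⟩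

theorem mediant_num_den {a b : ℚ} (h : b.num * (a.den:ℤ) - a.num * (b.den:ℤ) = 1) :
    (mediant a b).num = a.num + b.num ∧ (mediant a b).den = a.den + b.den := by
  have hd : a.den + b.den ≠ 0 := by
    have := a.den_pos; omega
  have hcop : IsCoprime (a.num + b.num) ((a.den + b.den : ℕ) : ℤ) :=
    ⟨(a.den : ℤ), -a.num, by push_cast; linarith [h]⟩
  have hc : (a.num + b.num).natAbs.Coprime (a.den + b.den) := by
    have := Int.isCoprime_iff_gcd_eq_one.mp hcop
    exact this
  have := num_den_div (a.num + b.num) (a.den + b.den) hd hc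
  have hm : mediant a b = ((a.num + b.num : ℤ) : ℚ) / ((a.den + b.den : ℕ) : ℚ) := by
    unfold mediant; push_cast; ring
  rw [hm]
  exact this

theorem im_get_even (l : List ℚ) : ∀ j, (insertMediants l)[2*j]? = l[j]? := by
  induction l with
  | nil => intro j; rfl
  | cons a t ih =>
    cases t with
    | nil =>
      intro j
      rw [show insertMediants [a] = [a] from rfl]
      rcases j with _ | j
      · rfl
      · simp
    | cons b r =>
      intro j
      cases j with
      | zero => rfl
      | succ j =>
        have : 2 * (j+1) = (2*j) + 1 + 1 := by ring
        rw [show insertMediants (a :: b :: r) = a :: mediant a b :: insertMediants (b :: r) from rfl,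
          this]
        simpa using ih j

theorem im_get_odd' (l : List ℚ) : ∀ (j : ℕ) (y : ℚ),
    (insertMediants l)[2*j+1]? = some y →
    ∃ a b, l[j]? = some a ∧ l[j+1]? = some b ∧ y = mediant a b := by
  induction l with
  | nil => intro j y h; simp [insertMediants] at h
  | cons a t ih =>
    cases t with
    | nil =>
      intro j y h
      rw [show insertMediants [a] = [a] from rfl] at h
      rcases j with _ | j <;> simp at h
    | cons b r =>
      intro j y h
      rw [show insertMediants (a :: b :: r) = a :: mediant a b :: insertMediants (b :: r) from rfl] at h
      cases j with
      | zero =>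
        simp at h
        exact ⟨a, b, rfl, rfl, h.symm⟩
      | succ j =>
        rw [show 2*(j+1)+1 = (2*j+1) + 1 + 1 by ring] at h
        simp only [List.getElem?_cons_succ] at h
        obtain ⟨a', b', h1, h2, h3⟩ := ih j y h
        exact ⟨a', b', h1, h2, h3⟩

theorem some_inj' {α} {x y : α} (h1 : (some x : Option α) = some y) : x = y := Option.some.inj h1

theorem decomp2 (l : List ℚ) (i : ℕ) (x0 x1 : ℚ)
    (h0 : (insertMediants l)[i]? = some x0)
    (h1 : (insertMediants l)[i+1]? = some x1) :
    (∃ j a b, l[j]? = some a ∧ l[j+1]? = some b ∧ x0 = a ∧ x1 = mediant a b) ∨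
    (∃ j a b, l[j]? = some a ∧ l[j+1]? = some b ∧ x0 = mediant a b ∧ x1 = b) := by
  rcases Nat.even_or_odd i with ⟨j, hj⟩ | ⟨j, hj⟩
  · left
    rw [show i = 2*j by omega, im_get_even] at h0
    rw [show i+1 = 2*j+1 by omega] at h1
    obtain ⟨a, b, ha, hb, hm⟩ := im_get_odd' l j x1 h1
    have hax : x0 = a := some_inj' (h0.symm.trans ha)
    exact ⟨j, a, b, ha, hb, hax, hm⟩
  · right
    rw [show i+1 = 2*(j+1) by omega, im_get_even] at h1
    rw [show i = 2*j+1 by omega] at h0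
    obtain ⟨a, b, ha, hb, hm⟩ := im_get_odd' l j x0 h0
    have hbx : x1 = b := some_inj' (h1.symm.trans hb)
    exact ⟨j, a, b, ha, hb, hm, hbx⟩

theorem decomp3 (l : List ℚ) (i : ℕ) (x0 x1 x2 : ℚ)
    (h0 : (insertMediants l)[i]? = some x0)
    (h1 : (insertMediants l)[i+1]? = some x1)
    (h2 : (insertMediants l)[i+2]? = some x2) :
    (∃ j a b, l[j]? = some a ∧ l[j+1]? = some b ∧
      x0 = a ∧ x1 = mediant a b ∧ x2 = b) ∨
    (∃ j a b c, l[j]? = some a ∧ l[j+1]? = some b ∧ l[j+2]? = some c ∧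
      x0 = mediant a b ∧ x1 = b ∧ x2 = mediant b c) := by
  rcases Nat.even_or_odd i with ⟨j, hj⟩ | ⟨j, hj⟩
  · left
    rw [show i = 2*j by omega, im_get_even] at h0
    rw [show i+2 = 2*(j+1) by omega, im_get_even] at h2
    rw [show i+1 = 2*j+1 by omega] at h1
    obtain ⟨a, b, ha, hb, hm⟩ := im_get_odd' l j x1 h1
    have hax : x0 = a := some_inj' (h0.symm.trans ha)
    have hbx : x2 = b := some_inj' (h2.symm.trans hb)
    exact ⟨j, a, b, ha, hb, hax, hm, hbx⟩
  · right
    rw [show i+1 = 2*(j+1) by omega, im_get_even] at h1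
    rw [show i = 2*j+1 by omega] at h0
    rw [show i+2 = 2*(j+1)+1 by omega] at h2
    obtain ⟨a, b, ha, hb, hm⟩ := im_get_odd' l j x0 h0
    obtain ⟨b', c, hb', hc, hm'⟩ := im_get_odd' l (j+1) x2 h2
    have hbx : x1 = b := some_inj' (h1.symm.trans hb)
    have hbb : b' = b := some_inj' (hb'.symm.trans hb)
    exact ⟨j, a, b, c, ha, hb, hc, hm, hbx, by rw [hm', hbb]⟩

theorem decomp4 (l : List ℚ) (i : ℕ) (x0 x1 x2 x3 : ℚ)
    (h0 : (insertMediants l)[i]? = some x0)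
    (h1 : (insertMediants l)[i+1]? = some x1)
    (h2 : (insertMediants l)[i+2]? = some x2)
    (h3 : (insertMediants l)[i+3]? = some x3) :
    (∃ j a b c, l[j]? = some a ∧ l[j+1]? = some b ∧ l[j+2]? = some c ∧
      x0 = a ∧ x1 = mediant a b ∧ x2 = b ∧ x3 = mediant b c) ∨
    (∃ j a b c, l[j]? = some a ∧ l[j+1]? = some b ∧ l[j+2]? = some c ∧
      x0 = mediant a b ∧ x1 = b ∧ x2 = mediant b c ∧ x3 = c) := by
  rcases Nat.even_or_odd i with ⟨j, hj⟩ | ⟨j, hj⟩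
  · left
    rw [show i = 2*j by omega, im_get_even] at h0
    rw [show i+2 = 2*(j+1) by omega, im_get_even] at h2
    rw [show i+1 = 2*j+1 by omega] at h1
    rw [show i+3 = 2*(j+1)+1 by omega] at h3
    obtain ⟨a, b, ha, hb, hm⟩ := im_get_odd' l j x1 h1
    obtain ⟨b', c, hb', hc, hm'⟩ := im_get_odd' l (j+1) x3 h3
    have hax : x0 = a := some_inj' (h0.symm.trans ha)
    have hbx : x2 = b := some_inj' (h2.symm.trans hb)
    have hbb : b' = b := some_inj' (hb'.symm.trans hb)
    exact ⟨j, a, b, c, ha, hb, hc, hax, hm, hbx, by rw [hm', hbb]⟩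
  · right
    rw [show i+1 = 2*(j+1) by omega, im_get_even] at h1
    rw [show i+3 = 2*(j+2) by omega, im_get_even] at h3
    rw [show i = 2*j+1 by omega] at h0
    rw [show i+2 = 2*(j+1)+1 by omega] at h2
    obtain ⟨a, b, ha, hb, hm⟩ := im_get_odd' l j x0 h0
    obtain ⟨b', c, hb', hc, hm'⟩ := im_get_odd' l (j+1) x2 h2
    have hbx : x1 = b := some_inj' (h1.symm.trans hb)
    have hbb : b' = b := some_inj' (hb'.symm.trans hb)
    have hcx : x3 = c := some_inj' (h3.symm.trans hc)
    exact ⟨j, a, b, c, ha, hb, hc, hm, hbx, by rw [hm', hbb], hcx⟩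

theorem decomp5 (l : List ℚ) (i : ℕ) (x0 x1 x2 x3 x4 : ℚ)
    (h0 : (insertMediants l)[i]? = some x0)
    (h1 : (insertMediants l)[i+1]? = some x1)
    (h2 : (insertMediants l)[i+2]? = some x2)
    (h3 : (insertMediants l)[i+3]? = some x3)
    (h4 : (insertMediants l)[i+4]? = some x4) :
    (∃ j a b c, l[j]? = some a ∧ l[j+1]? = some b ∧ l[j+2]? = some c ∧
      x0 = a ∧ x1 = mediant a b ∧ x2 = b ∧ x3 = mediant b c ∧ x4 = c) ∨
    (∃ j a b c d, l[j]? = some a ∧ l[j+1]? = some b ∧ l[j+2]? = some c ∧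
      l[j+3]? = some d ∧
      x0 = mediant a b ∧ x1 = b ∧ x2 = mediant b c ∧ x3 = c ∧ x4 = mediant c d) := by
  rcases Nat.even_or_odd i with ⟨j, hj⟩ | ⟨j, hj⟩
  · left
    rw [show i = 2*j by omega, im_get_even] at h0
    rw [show i+2 = 2*(j+1) by omega, im_get_even] at h2
    rw [show i+4 = 2*(j+2) by omega, im_get_even] at h4
    rw [show i+1 = 2*j+1 by omega] at h1
    rw [show i+3 = 2*(j+1)+1 by omega] at h3
    obtain ⟨a, b, ha, hb, hm⟩ := im_get_odd' l j x1 h1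
    obtain ⟨b', c, hb', hc, hm'⟩ := im_get_odd' l (j+1) x3 h3
    have hax : x0 = a := some_inj' (h0.symm.trans ha)
    have hbx : x2 = b := some_inj' (h2.symm.trans hb)
    have hbb : b' = b := some_inj' (hb'.symm.trans hb)
    have hcx : x4 = c := some_inj' (h4.symm.trans hc)
    exact ⟨j, a, b, c, ha, hb, hc, hax, hm, hbx, by rw [hm', hbb], hcx⟩
  · right
    rw [show i+1 = 2*(j+1) by omega, im_get_even] at h1
    rw [show i+3 = 2*(j+2) by omega, im_get_even] at h3
    rw [show i = 2*j+1 by omega] at h0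
    rw [show i+2 = 2*(j+1)+1 by omega] at h2
    rw [show i+4 = 2*(j+2)+1 by omega] at h4
    obtain ⟨a, b, ha, hb, hm⟩ := im_get_odd' l j x0 h0
    obtain ⟨b', c, hb', hc, hm'⟩ := im_get_odd' l (j+1) x2 h2
    obtain ⟨c', d, hc', hd, hm''⟩ := im_get_odd' l (j+2) x4 h4
    have hbx : x1 = b := some_inj' (h1.symm.trans hb)
    have hbb : b' = b := some_inj' (hb'.symm.trans hb)
    have hcx : x3 = c := some_inj' (h3.symm.trans hc)
    have hcc : c' = c := some_inj' (hc'.symm.trans hc)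
    exact ⟨j, a, b, c, d, ha, hb, hc, hd, hm, hbx, by rw [hm', hbb], hcx, by rw [hm'', hcc]⟩

/-- The denominator invariants carried through the induction. -/
structure FInv (n : ℕ) : Prop where
  U : ∀ i a b, (fareyList n)[i]? = some a → (fareyList n)[i+1]? = some b →
      b.num * (a.den:ℤ) - a.num * (b.den:ℤ) = 1
  H1 : ∀ i a b, (fareyList n)[i]? = some a → (fareyList n)[i+1]? = some b →
      (b.den:ℤ) ≤ ((n:ℤ)+1) * a.den ∧ (a.den:ℤ) ≤ ((n:ℤ)+1) * b.den
  H2 : ∀ i a b c, (fareyList n)[i]? = some a → (fareyList n)[i+1]? = some b →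
      (fareyList n)[i+2]? = some c →
      (c.den:ℤ) ≤ (n:ℤ) * a.den ∧ (a.den:ℤ) ≤ (n:ℤ) * c.den
  H3 : ∀ i a b c, (fareyList n)[i]? = some a → (fareyList n)[i+1]? = some b →
      (fareyList n)[i+2]? = some c →
      2*(c.den:ℤ) ≤ (a.den:ℤ) + (n:ℤ) * b.den ∧ 2*(a.den:ℤ) ≤ (c.den:ℤ) + (n:ℤ) * b.den
  HQ : ∀ i a b c, (fareyList n)[i]? = some a → (fareyList n)[i+1]? = some b →
      (fareyList n)[i+2]? = some c →
      (c.den:ℤ)^2 ≤ (n:ℤ) * a.den * b.den ∧ (a.den:ℤ)^2 ≤ (n:ℤ) * b.den * c.den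
  H4 : ∀ i a b c d, (fareyList n)[i]? = some a → (fareyList n)[i+1]? = some b →
      (fareyList n)[i+2]? = some c → (fareyList n)[i+3]? = some d →
      (c.den:ℤ)*d.den ≤ 2*(n:ℤ)*(a.den*b.den) ∧ (a.den:ℤ)*b.den ≤ 2*(n:ℤ)*(c.den*d.den)

theorem finv_zero : FInv 0 := by
  have hnone : ∀ i, (fareyList 0)[i+2]? = none := by
    intro i
    rw [show (fareyList 0) = [0,1] from rfl]
    rcases i with _ | i <;> rfl
  have hpair : ∀ i a b, (fareyList 0)[i]? = some a → (fareyList 0)[i+1]? = some b →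
      a = 0 ∧ b = 1 := by
    intro i a b ha hb
    rcases i with _ | i
    · exact ⟨(some_inj' ha).symm, (some_inj' hb).symm⟩
    · rw [show i+1+1 = i+2 by ring, hnone] at hb; exact absurd hb (by simp)
  refine ⟨?_, ?_, ?_, ?_, ?_, ?_⟩
  · intro i a b ha hb
    obtain ⟨ea, eb⟩ := hpair i a b ha hb
    subst ea; subst eb; decide
  · intro i a b ha hb
    obtain ⟨ea, eb⟩ := hpair i a b ha hb
    subst ea; subst eb; constructor <;> decide
  · intro i a b c _ _ hc; rw [hnone] at hc; exact absurd hc (by simp)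
  · intro i a b c _ _ hc; rw [hnone] at hc; exact absurd hc (by simp)
  · intro i a b c _ _ hc; rw [hnone] at hc; exact absurd hc (by simp)
  · intro i a b c d _ _ hc _; rw [hnone] at hc; exact absurd hc (by simp)

set_option maxHeartbeats 2000000 in
theorem finv_succ (n : ℕ) (h : FInv n) : FInv (n+1) := by
  have hfl : fareyList (n+1) = insertMediants (fareyList n) := rfl
  have hn0 : (0:ℤ) ≤ (n:ℤ) := Int.natCast_nonneg n
  have dpos : ∀ q : ℚ, (0:ℤ) < (q.den:ℤ) := fun q => by exact_mod_cast q.den_pos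
  refine ⟨?_, ?_, ?_, ?_, ?_, ?_⟩
  -- U
  · intro i a b ha hb
    rw [hfl] at ha hb
    rcases decomp2 _ i a b ha hb with ⟨j,A,B,hA,hB,e0,e1⟩|⟨j,A,B,hA,hB,e0,e1⟩ <;>
      rw [e0, e1] <;>
    · have hU := h.U j A B hA hB
      obtain ⟨nm, dm⟩ := mediant_num_den hU
      rw [nm, dm]; push_cast; linear_combination hU
  -- H1
  · intro i a b ha hb
    rw [hfl] at ha hb
    rcases decomp2 _ i a b ha hb with ⟨j,A,B,hA,hB,e0,e1⟩|⟨j,A,B,hA,hB,e0,e1⟩ <;>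
      rw [e0, e1] <;>
    · have hU := h.U j A B hA hB
      have h1 := h.H1 j A B hA hB
      obtain ⟨nm, dm⟩ := mediant_num_den hU
      have pA := dpos A; have pB := dpos B
      have hnA : (0:ℤ) ≤ (n:ℤ) * A.den := mul_nonneg hn0 (le_of_lt pA)
      have hnB : (0:ℤ) ≤ (n:ℤ) * B.den := mul_nonneg hn0 (le_of_lt pB)
      constructor <;> simp only [dm] <;> push_cast <;> linarith [h1.1, h1.2, pA, pB, hnA, hnB]
  -- H2
  · intro i a b c ha hb hc
    rw [hfl] at ha hb hc
    rcases decomp3 _ i a b c ha hb hc with ⟨j,A,B,hA,hB,e0,e1,e2⟩|⟨j,A,B,C,hA,hB,hC,e0,e1,e2⟩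
    · rw [e0, e2]
      have h1 := h.H1 j A B hA hB
      exact ⟨by push_cast; linarith [h1.1], by push_cast; linarith [h1.2]⟩
    · rw [e0, e2]
      have hU1 := h.U j A B hA hB
      have hU2 := h.U (j+1) B C hB hC
      obtain ⟨_, dm1⟩ := mediant_num_den hU1
      obtain ⟨_, dm2⟩ := mediant_num_den hU2
      have h2 := h.H2 j A B C hA hB hC
      have pA := dpos A; have pB := dpos B; have pC := dpos C
      have hnB : (0:ℤ) ≤ (n:ℤ) * B.den := mul_nonneg hn0 (le_of_lt pB)
      constructor <;> simp only [dm1, dm2] <;> push_cast <;> linarith [h2.1, h2.2, pA, pC, hnB]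
  -- H3
  · intro i a b c ha hb hc
    rw [hfl] at ha hb hc
    rcases decomp3 _ i a b c ha hb hc with ⟨j,A,B,hA,hB,e0,e1,e2⟩|⟨j,A,B,C,hA,hB,hC,e0,e1,e2⟩
    · rw [e0, e1, e2]
      have hU1 := h.U j A B hA hB
      obtain ⟨_, dm1⟩ := mediant_num_den hU1
      have h1 := h.H1 j A B hA hB
      have pA := dpos A; have pB := dpos B
      have hnA : (0:ℤ) ≤ (n:ℤ) * A.den := mul_nonneg hn0 (le_of_lt pA)
      have hnB : (0:ℤ) ≤ (n:ℤ) * B.den := mul_nonneg hn0 (le_of_lt pB)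
      constructor <;> simp only [dm1] <;> push_cast <;> linarith [h1.1, h1.2, pA, pB, hnA, hnB]
    · rw [e0, e1, e2]
      have hU1 := h.U j A B hA hB
      have hU2 := h.U (j+1) B C hB hC
      obtain ⟨_, dm1⟩ := mediant_num_den hU1
      obtain ⟨_, dm2⟩ := mediant_num_den hU2
      have h3 := h.H3 j A B C hA hB hC
      constructor <;> simp only [dm1, dm2] <;> push_cast <;> linarith [h3.1, h3.2]
  -- HQ
  · intro i a b c ha hb hc
    rw [hfl] at ha hb hc
    rcases decomp3 _ i a b c ha hb hc with ⟨j,A,B,hA,hB,e0,e1,e2⟩|⟨j,A,B,C,hA,hB,hC,e0,e1,e2⟩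
    · rw [e0, e1, e2]
      have hU1 := h.U j A B hA hB
      obtain ⟨_, dm1⟩ := mediant_num_den hU1
      have h1 := h.H1 j A B hA hB
      have pA := dpos A; have pB := dpos B
      have k1 := mul_le_mul_of_nonneg_left h1.1 (le_of_lt pB)
      have k2 := mul_le_mul_of_nonneg_left h1.2 (le_of_lt pA)
      have s1 : (0:ℤ) ≤ (n:ℤ)*(A.den*A.den) := mul_nonneg hn0 (mul_nonneg (le_of_lt pA) (le_of_lt pA))
      have s2 : (0:ℤ) ≤ (n:ℤ)*(B.den*B.den) := mul_nonneg hn0 (mul_nonneg (le_of_lt pB) (le_of_lt pB))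
      have s3 : (0:ℤ) ≤ (A.den:ℤ)*A.den := mul_nonneg (le_of_lt pA) (le_of_lt pA)
      have s4 : (0:ℤ) ≤ (B.den:ℤ)*B.den := mul_nonneg (le_of_lt pB) (le_of_lt pB)
      constructor <;> simp only [dm1] <;> push_cast <;> linarith [k1, k2, s1, s2, s3, s4]
    · rw [e0, e1, e2]
      have hU1 := h.U j A B hA hB
      have hU2 := h.U (j+1) B C hB hC
      obtain ⟨_, dm1⟩ := mediant_num_den hU1
      obtain ⟨_, dm2⟩ := mediant_num_den hU2
      have h3 := h.H3 j A B C hA hB hC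
      have hq := h.HQ j A B C hA hB hC
      have pB := dpos B
      have k1 := mul_le_mul_of_nonneg_left h3.1 (le_of_lt pB)
      have k2 := mul_le_mul_of_nonneg_left h3.2 (le_of_lt pB)
      constructor <;> simp only [dm1, dm2] <;> push_cast <;> linarith [hq.1, hq.2, k1, k2]
  -- H4
  · intro i a b c d ha hb hc hd
    rw [hfl] at ha hb hc hd
    rcases decomp4 _ i a b c d ha hb hc hd with
      ⟨j,A,B,C,hA,hB,hC,e0,e1,e2,e3⟩|⟨j,A,B,C,hA,hB,hC,e0,e1,e2,e3⟩
    · rw [e0, e1, e2, e3]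
      have hU1 := h.U j A B hA hB
      have hU2 := h.U (j+1) B C hB hC
      obtain ⟨_, dm1⟩ := mediant_num_den hU1
      obtain ⟨_, dm2⟩ := mediant_num_den hU2
      have h1 := h.H1 j A B hA hB
      have h2 := h.H2 j A B C hA hB hC
      have hq := h.HQ j A B C hA hB hC
      have pA := dpos A; have pB := dpos B; have pC := dpos C
      have k1 := mul_le_mul_of_nonneg_left h1.1 (le_of_lt pB)
      have k2 := mul_le_mul_of_nonneg_left h1.2 (le_of_lt pB)
      have k3 := mul_le_mul_of_nonneg_left h2.1 (le_of_lt pB)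
      have s1 : (0:ℤ) ≤ (n:ℤ)*((A.den:ℤ)*A.den) := mul_nonneg hn0 (mul_nonneg (le_of_lt pA) (le_of_lt pA))
      have s2 : (0:ℤ) ≤ (n:ℤ)*((B.den:ℤ)*B.den) := mul_nonneg hn0 (mul_nonneg (le_of_lt pB) (le_of_lt pB))
      have s3 : (0:ℤ) ≤ (A.den:ℤ)*A.den := mul_nonneg (le_of_lt pA) (le_of_lt pA)
      have s4 : (0:ℤ) ≤ (B.den:ℤ)*B.den := mul_nonneg (le_of_lt pB) (le_of_lt pB)
      have s5 : (0:ℤ) ≤ (n:ℤ)*((B.den:ℤ)*C.den) := mul_nonneg hn0 (mul_nonneg (le_of_lt pB) (le_of_lt pC))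
      have s6 : (0:ℤ) ≤ (B.den:ℤ)*C.den := mul_nonneg (le_of_lt pB) (le_of_lt pC)
      have s7 : (0:ℤ) ≤ (n:ℤ)*((A.den:ℤ)*B.den) := mul_nonneg hn0 (mul_nonneg (le_of_lt pA) (le_of_lt pB))
      have s8 : (0:ℤ) ≤ (A.den:ℤ)*B.den := mul_nonneg (le_of_lt pA) (le_of_lt pB)
      constructor <;> simp only [dm1, dm2] <;> push_cast <;> linarith [hq.1, hq.2, k1, k2, k3, s1, s2, s3, s4, s5, s6, s7, s8]
    · rw [e0, e1, e2, e3]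
      have hU1 := h.U j A B hA hB
      have hU2 := h.U (j+1) B C hB hC
      obtain ⟨_, dm1⟩ := mediant_num_den hU1
      obtain ⟨_, dm2⟩ := mediant_num_den hU2
      have h1' := h.H1 (j+1) B C hB hC
      have h2 := h.H2 j A B C hA hB hC
      have hq := h.HQ j A B C hA hB hC
      have pA := dpos A; have pB := dpos B; have pC := dpos C
      have k1 := mul_le_mul_of_nonneg_left h1'.1 (le_of_lt pB)
      have k2 := mul_le_mul_of_nonneg_left h1'.2 (le_of_lt pB)
      have k3 := mul_le_mul_of_nonneg_left h2.2 (le_of_lt pB)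
      have s1 : (0:ℤ) ≤ (n:ℤ)*((A.den:ℤ)*B.den) := mul_nonneg hn0 (mul_nonneg (le_of_lt pA) (le_of_lt pB))
      have s2 : (0:ℤ) ≤ (n:ℤ)*((C.den:ℤ)*C.den) := mul_nonneg hn0 (mul_nonneg (le_of_lt pC) (le_of_lt pC))
      have s3 : (0:ℤ) ≤ (A.den:ℤ)*B.den := mul_nonneg (le_of_lt pA) (le_of_lt pB)
      have s4 : (0:ℤ) ≤ (C.den:ℤ)*C.den := mul_nonneg (le_of_lt pC) (le_of_lt pC)
      have s5 : (0:ℤ) ≤ (n:ℤ)*((B.den:ℤ)*C.den) := mul_nonneg hn0 (mul_nonneg (le_of_lt pB) (le_of_lt pC))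
      have s6 : (0:ℤ) ≤ (B.den:ℤ)*C.den := mul_nonneg (le_of_lt pB) (le_of_lt pC)
      constructor <;> simp only [dm1, dm2] <;> push_cast <;> linarith [hq.1, hq.2, k1, k2, k3, s1, s2, s3, s4, s5, s6]

theorem get?_lt_of_get? {l : List ℚ} {j : ℕ} {x : ℚ} (h : l[j]? = some x) {i : ℕ}
    (hij : i < j) : ∃ y, l[i]? = some y := by
  obtain ⟨hj, -⟩ := List.getElem?_eq_some_iff.1 h
  exact ⟨_, List.getElem?_eq_getElem (lt_trans hij hj)⟩

theorem key (n : ℕ) (h : FInv n) :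
    ∀ i k, 1 ≤ k → k ≤ 3 → ∀ a b c d : ℚ,
      (fareyList (n+1))[i]? = some a →
      (fareyList (n+1))[i+1]? = some b →
      (fareyList (n+1))[i+k]? = some c →
      (fareyList (n+1))[i+k+1]? = some d →
      (c.den:ℤ)*d.den ≤ 3*((n:ℤ)+1)*((a.den:ℤ)*b.den) ∧
      (a.den:ℤ)*b.den ≤ 3*((n:ℤ)+1)*((c.den:ℤ)*d.den) := by
  have hfl : fareyList (n+1) = insertMediants (fareyList n) := rfl
  have hn0 : (0:ℤ) ≤ (n:ℤ) := Int.natCast_nonneg n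
  have dpos : ∀ q : ℚ, (0:ℤ) < (q.den:ℤ) := fun q => by exact_mod_cast q.den_pos
  intro i k hk1 hk3 a b c d ha hb hc hd
  rw [hfl] at ha hb hc hd
  interval_cases k
  -- k = 1
  · have hcb : c = b := some_inj' (hc.symm.trans hb)
    subst hcb
    rw [show i+1+1 = i+2 by ring] at hd
    rcases decomp3 _ i a c d ha hb hd with ⟨j,A,B,hA,hB,e0,e1,e2⟩|⟨j,A,B,C,hA,hB,hC,e0,e1,e2⟩
    · rw [e0, e1, e2]
      have hU1 := h.U j A B hA hB
      obtain ⟨_, dm1⟩ := mediant_num_den hU1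
      have h1 := h.H1 j A B hA hB
      have pA := dpos A; have pB := dpos B
      have k1 := mul_le_mul_of_nonneg_right h1.1 (le_of_lt pB)
      have k2 := mul_le_mul_of_nonneg_right h1.2 (le_of_lt pA)
      have s1 : (0:ℤ) ≤ (n:ℤ)*((A.den:ℤ)*A.den) := by positivity
      have s2 : (0:ℤ) ≤ (n:ℤ)*((B.den:ℤ)*B.den) := by positivity
      have s3 : (0:ℤ) ≤ (n:ℤ)*((A.den:ℤ)*B.den) := by positivity
      have s4 : (0:ℤ) ≤ (A.den:ℤ)*A.den := by positivity
      have s5 : (0:ℤ) ≤ (B.den:ℤ)*B.den := by positivity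
      have s6 : (0:ℤ) ≤ (A.den:ℤ)*B.den := by positivity
      constructor <;> simp only [dm1] <;> push_cast <;> linarith [k1, k2, s1, s2, s3, s4, s5, s6]
    · rw [e0, e1, e2]
      have hU1 := h.U j A B hA hB
      have hU2 := h.U (j+1) B C hB hC
      obtain ⟨_, dm1⟩ := mediant_num_den hU1
      obtain ⟨_, dm2⟩ := mediant_num_den hU2
      have h2 := h.H2 j A B C hA hB hC
      have pA := dpos A; have pB := dpos B; have pC := dpos C
      have k1 := mul_le_mul_of_nonneg_right h2.1 (le_of_lt pB)
      have k2 := mul_le_mul_of_nonneg_right h2.2 (le_of_lt pB)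
      have s1 : (0:ℤ) ≤ (n:ℤ)*((B.den:ℤ)*B.den) := by positivity
      have s2 : (0:ℤ) ≤ (B.den:ℤ)*B.den := by positivity
      have s3 : (0:ℤ) ≤ (n:ℤ)*((A.den:ℤ)*B.den) := by positivity
      have s4 : (0:ℤ) ≤ (A.den:ℤ)*B.den := by positivity
      have s5 : (0:ℤ) ≤ (n:ℤ)*((B.den:ℤ)*C.den) := by positivity
      have s6 : (0:ℤ) ≤ (B.den:ℤ)*C.den := by positivity
      constructor <;> simp only [dm1, dm2] <;> push_cast <;> linarith [k1, k2, s1, s2, s3, s4, s5, s6]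
  -- k = 2
  · rw [show i+2+1 = i+3 by ring] at hd
    rcases decomp4 _ i a b c d ha hb hc hd with
      ⟨j,A,B,C,hA,hB,hC,e0,e1,e2,e3⟩|⟨j,A,B,C,hA,hB,hC,e0,e1,e2,e3⟩
    · rw [e0, e1, e2, e3]
      have hU1 := h.U j A B hA hB
      have hU2 := h.U (j+1) B C hB hC
      obtain ⟨_, dm1⟩ := mediant_num_den hU1
      obtain ⟨_, dm2⟩ := mediant_num_den hU2
      have h1 := h.H1 j A B hA hB
      have h2 := h.H2 j A B C hA hB hC
      have hq := h.HQ j A B C hA hB hC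
      have pA := dpos A; have pB := dpos B; have pC := dpos C
      have k1 := mul_le_mul_of_nonneg_right h1.1 (le_of_lt pB)
      have k2 := mul_le_mul_of_nonneg_right h1.2 (le_of_lt pB)
      have k3 := mul_le_mul_of_nonneg_right h2.1 (le_of_lt pB)
      have s1 : (0:ℤ) ≤ (n:ℤ)*((A.den:ℤ)*A.den) := by positivity
      have s2 : (0:ℤ) ≤ (n:ℤ)*((A.den:ℤ)*B.den) := by positivity
      have s3 : (0:ℤ) ≤ (n:ℤ)*((B.den:ℤ)*B.den) := by positivity
      have s4 : (0:ℤ) ≤ (n:ℤ)*((B.den:ℤ)*C.den) := by positivity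
      have s5 : (0:ℤ) ≤ (A.den:ℤ)*A.den := by positivity
      have s6 : (0:ℤ) ≤ (A.den:ℤ)*B.den := by positivity
      have s7 : (0:ℤ) ≤ (B.den:ℤ)*B.den := by positivity
      have s8 : (0:ℤ) ≤ (B.den:ℤ)*C.den := by positivity
      constructor <;> simp only [dm1, dm2] <;> push_cast <;> linarith [hq.1, hq.2, k1, k2, k3, s1, s2, s3, s4, s5, s6, s7, s8]
    · rw [e0, e1, e2, e3]
      have hU1 := h.U j A B hA hB
      have hU2 := h.U (j+1) B C hB hC
      obtain ⟨_, dm1⟩ := mediant_num_den hU1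
      obtain ⟨_, dm2⟩ := mediant_num_den hU2
      have h1' := h.H1 (j+1) B C hB hC
      have h2 := h.H2 j A B C hA hB hC
      have hq := h.HQ j A B C hA hB hC
      have pA := dpos A; have pB := dpos B; have pC := dpos C
      have k1 := mul_le_mul_of_nonneg_right h1'.1 (le_of_lt pB)
      have k2 := mul_le_mul_of_nonneg_right h1'.2 (le_of_lt pB)
      have k3 := mul_le_mul_of_nonneg_right h2.2 (le_of_lt pB)
      have s1 : (0:ℤ) ≤ (n:ℤ)*((A.den:ℤ)*B.den) := by positivity
      have s2 : (0:ℤ) ≤ (n:ℤ)*((B.den:ℤ)*B.den) := by positivity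
      have s3 : (0:ℤ) ≤ (n:ℤ)*((B.den:ℤ)*C.den) := by positivity
      have s4 : (0:ℤ) ≤ (n:ℤ)*((C.den:ℤ)*C.den) := by positivity
      have s5 : (0:ℤ) ≤ (A.den:ℤ)*B.den := by positivity
      have s6 : (0:ℤ) ≤ (B.den:ℤ)*B.den := by positivity
      have s7 : (0:ℤ) ≤ (B.den:ℤ)*C.den := by positivity
      have s8 : (0:ℤ) ≤ (C.den:ℤ)*C.den := by positivity
      constructor <;> simp only [dm1, dm2] <;> push_cast <;> linarith [hq.1, hq.2, k1, k2, k3, s1, s2, s3, s4, s5, s6, s7, s8]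
  -- k = 3
  · obtain ⟨x2, hx2⟩ := get?_lt_of_get? hc (show i+2 < i+3 by omega)
    rw [show i+3+1 = i+4 by ring] at hd
    rcases decomp5 _ i a b x2 c d ha hb hx2 hc hd with
      ⟨j,A,B,C,hA,hB,hC,e0,e1,e2,e3,e4⟩|⟨j,A,B,C,D,hA,hB,hC,hD,e0,e1,e2,e3,e4⟩
    · rw [e0, e1, e3, e4]
      have hU1 := h.U j A B hA hB
      have hU2 := h.U (j+1) B C hB hC
      obtain ⟨_, dm1⟩ := mediant_num_den hU1
      obtain ⟨_, dm2⟩ := mediant_num_den hU2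
      have h2 := h.H2 j A B C hA hB hC
      have hq := h.HQ j A B C hA hB hC
      have pA := dpos A; have pB := dpos B; have pC := dpos C
      have k1 := mul_le_mul_of_nonneg_right h2.1 (le_of_lt pB)
      have k2 := mul_le_mul_of_nonneg_right h2.2 (le_of_lt pB)
      have s1 : (0:ℤ) ≤ (n:ℤ)*((A.den:ℤ)*A.den) := by positivity
      have s2 : (0:ℤ) ≤ (n:ℤ)*((A.den:ℤ)*B.den) := by positivity
      have s3 : (0:ℤ) ≤ (n:ℤ)*((B.den:ℤ)*C.den) := by positivity
      have s4 : (0:ℤ) ≤ (n:ℤ)*((C.den:ℤ)*C.den) := by positivity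
      have s5 : (0:ℤ) ≤ (A.den:ℤ)*A.den := by positivity
      have s6 : (0:ℤ) ≤ (A.den:ℤ)*B.den := by positivity
      have s7 : (0:ℤ) ≤ (B.den:ℤ)*C.den := by positivity
      have s8 : (0:ℤ) ≤ (C.den:ℤ)*C.den := by positivity
      constructor <;> simp only [dm1, dm2] <;> push_cast <;> linarith [hq.1, hq.2, k1, k2, s1, s2, s3, s4, s5, s6, s7, s8]
    · rw [e0, e1, e3, e4]
      have hU1 := h.U j A B hA hB
      have hU3 := h.U (j+2) C D hC hD
      obtain ⟨_, dm1⟩ := mediant_num_den hU1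
      obtain ⟨_, dm3⟩ := mediant_num_den hU3
      have hq := h.HQ j A B C hA hB hC
      have hq' := h.HQ (j+1) B C D hB hC hD
      have h4 := h.H4 j A B C D hA hB hC hD
      have pA := dpos A; have pB := dpos B; have pC := dpos C; have pD := dpos D
      have s1 : (0:ℤ) ≤ (n:ℤ)*((A.den:ℤ)*B.den) := by positivity
      have s2 : (0:ℤ) ≤ (n:ℤ)*((B.den:ℤ)*B.den) := by positivity
      have s3 : (0:ℤ) ≤ (n:ℤ)*((C.den:ℤ)*C.den) := by positivity
      have s4 : (0:ℤ) ≤ (n:ℤ)*((C.den:ℤ)*D.den) := by positivity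
      have s5 : (0:ℤ) ≤ (A.den:ℤ)*B.den := by positivity
      have s6 : (0:ℤ) ≤ (B.den:ℤ)*B.den := by positivity
      have s7 : (0:ℤ) ≤ (C.den:ℤ)*C.den := by positivity
      have s8 : (0:ℤ) ≤ (C.den:ℤ)*D.den := by positivity
      constructor <;> simp only [dm1, dm3] <;> push_cast <;> linarith [hq.1, hq.2, hq'.1, hq'.2, h4.1, h4.2, s1, s2, s3, s4, s5, s6, s7, s8]

theorem finv_all : ∀ n, FInv n
  | 0 => finv_zero
  | (n+1) => finv_succ n (finv_all n)

theorem consec_sub {a b : ℚ} (hU : b.num * (a.den:ℤ) - a.num * (b.den:ℤ) = 1) :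
    (b:ℝ) - (a:ℝ) = 1 / ((a.den:ℝ) * (b.den:ℝ)) := by
  have pa : (0:ℚ) < (a.den:ℚ) := by exact_mod_cast a.den_pos
  have pb : (0:ℚ) < (b.den:ℚ) := by exact_mod_cast b.den_pos
  have hq : b - a = 1 / ((a.den:ℚ) * (b.den:ℚ)) := by
    rw [eq_div_iff (by positivity)]
    have ha1 : (a.num:ℚ) = a * (a.den:ℚ) := (div_eq_iff (ne_of_gt pa)).mp (Rat.num_div_den a)
    have hb1 : (b.num:ℚ) = b * (b.den:ℚ) := (div_eq_iff (ne_of_gt pb)).mp (Rat.num_div_den b)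
    have hUq : (b.num:ℚ) * (a.den:ℚ) - (a.num:ℚ) * (b.den:ℚ) = 1 := by exact_mod_cast hU
    linear_combination (b.den:ℚ) * ha1 - (a.den:ℚ) * hb1 + hUq
  calc (b:ℝ) - a = ((b - a : ℚ):ℝ) := by push_cast; ring
    _ = ((1 / ((a.den:ℚ)*(b.den:ℚ)) : ℚ) : ℝ) := by rw [hq]
    _ = 1 / ((a.den:ℝ)*(b.den:ℝ)) := by push_cast; ring

/-- There is an absolute constant `C ≥ 1` such that for all `n ≥ 1`, any two
complementary intervals `I = (a,b)` and `J = (c,d)` of `F_n` separated by at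
most two adjacent complementary intervals of `F_n` satisfy
`1/(Cn) ≤ |I|/|J| ≤ Cn`. -/
theorem nearby_farey_intervals_comparable :
    ∃ C : ℝ, 1 ≤ C ∧ ∀ n : ℕ, 1 ≤ n → ∀ i k : ℕ, 1 ≤ k → k ≤ 3 →
      ∀ a b c d : ℚ,
        (fareyList n)[i]? = some a →
        (fareyList n)[i + 1]? = some b →
        (fareyList n)[i + k]? = some c →
        (fareyList n)[i + k + 1]? = some d →
        1 / (C * n) ≤ ((b : ℝ) - a) / ((d : ℝ) - c) ∧
          ((b : ℝ) - a) / ((d : ℝ) - c) ≤ C * n := by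
  refine ⟨3, by norm_num, ?_⟩
  intro n hn i k hk1 hk3 a b c d ha hb hc hd
  obtain ⟨m, rfl⟩ : ∃ m, n = m + 1 := ⟨n-1, by omega⟩
  have hUab := (finv_all (m+1)).U i a b ha hb
  have hUcd := (finv_all (m+1)).U (i+k) c d hc hd
  have hkey := key m (finv_all m) i k hk1 hk3 a b c d ha hb hc hd
  have pa : (0:ℝ) < (a.den:ℝ) := by exact_mod_cast a.den_pos
  have pb : (0:ℝ) < (b.den:ℝ) := by exact_mod_cast b.den_pos
  have pc : (0:ℝ) < (c.den:ℝ) := by exact_mod_cast c.den_pos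
  have pd : (0:ℝ) < (d.den:ℝ) := by exact_mod_cast d.den_pos
  have e1 : (b:ℝ) - a = 1/((a.den:ℝ)*(b.den:ℝ)) := consec_sub hUab
  have e2 : (d:ℝ) - c = 1/((c.den:ℝ)*(d.den:ℝ)) := consec_sub hUcd
  have hab : (0:ℝ) < (a.den:ℝ)*(b.den:ℝ) := by positivity
  have hcd : (0:ℝ) < (c.den:ℝ)*(d.den:ℝ) := by positivity
  have hR : ((b:ℝ)-a)/((d:ℝ)-c) = ((c.den:ℝ)*(d.den:ℝ))/((a.den:ℝ)*(b.den:ℝ)) := by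
    rw [e1, e2]
    field_simp
  have hup : ((c.den:ℝ)*(d.den:ℝ)) ≤ 3*((m:ℝ)+1)*((a.den:ℝ)*(b.den:ℝ)) := by
    exact_mod_cast hkey.1
  have hdn : ((a.den:ℝ)*(b.den:ℝ)) ≤ 3*((m:ℝ)+1)*((c.den:ℝ)*(d.den:ℝ)) := by
    exact_mod_cast hkey.2
  have hm1 : ((m+1:ℕ):ℝ) = (m:ℝ)+1 := by push_cast; ring
  rw [hR, hm1]
  have h3 : (0:ℝ) < 3*((m:ℝ)+1) := by positivity
  constructor
  · rw [div_le_div_iff₀ h3 hab]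
    nlinarith [hdn]
  · rw [div_le_iff₀ hab]
    nlinarith [hup]
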